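/- arXiv:1803.02413 — 3 statements merged into one kernel-verified Lean document; each statement's English description precedes it below -/
import Mathlib

section
/- If $k \in L^{p,\infty}(\mathbb{R}^n)$ with $1 < p < \infty$ and $f \in L^1(\mathbb{R}^n)$, then the convolution $k * f$ satisfies $\|k * f\|_{L^{p,\infty}} \leq C \|k\|_{L^{p,\infty}} \|f\|_{L^1}$ for some constant $C$ depending only on $p$. -/
open MeasureTheory
open scoped NNReal ENNReal

/-- The weak `L^p` quasinorm `sup_{α>0} α · μ{x : ‖g x‖ > α}^{1/p}`. -/
noncomputable def wnorm {X E : Type*} [MeasurableSpace X] [Norm E]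
    (μ : Measure X) (p : ℝ) (g : X → E) : ℝ≥0∞ :=
  ⨆ α : ℝ≥0, (α : ℝ≥0∞) * μ {x | (α : ℝ) < ‖g x‖} ^ (1 / p)

open Set


/-- A measurable majorant with comparable distribution function. -/
lemma exists_majorant {X : Type*} [MeasurableSpace X] (μ : Measure X) (K : X → ℝ≥0∞) :
    ∃ G : X → ℝ≥0∞, Measurable G ∧ (∀ x, K x ≤ G x) ∧
      ∀ β : ℝ≥0∞, β ≠ 0 → β ≠ ⊤ → μ {x | β < G x} ≤ μ {x | β / 2 < K x} := by
  set E : ℤ → Set X := fun j => toMeasurable μ {x | (2 : ℝ≥0∞) ^ j < K x} with hE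
  set E' : ℤ → Set X := fun j => ⋂ i ∈ Set.Iic j, E i with hE'
  have hE'meas : ∀ j, MeasurableSet (E' j) := fun j =>
    MeasurableSet.biInter (Set.to_countable _) fun i _ => measurableSet_toMeasurable μ _
  have hE'sub : ∀ j, E' j ⊆ E j := fun j => Set.biInter_subset_of_mem (Set.mem_Iic.2 le_rfl)
  have hE'mono : ∀ {i j : ℤ}, i ≤ j → E' j ⊆ E' i := by
    intro i j hij
    exact Set.biInter_subset_biInter_left (fun a ha => le_trans ha hij)
  have hmemE' : ∀ (x : X) (j : ℤ), (∀ i : ℤ, i ≤ j → (2:ℝ≥0∞)^i < K x) → x ∈ E' j := by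
    intro x j h
    refine Set.mem_biInter fun i hi => ?_
    exact subset_toMeasurable μ _ (h i hi)
  refine ⟨fun x => ⨆ j : ℤ, (E' j).indicator (fun _ => (2:ℝ≥0∞) ^ (j+1)) x, ?_, ?_, ?_⟩
  · exact Measurable.iSup fun j => Measurable.indicator measurable_const (hE'meas j)
  · intro x
    rcases eq_or_ne (K x) 0 with h0 | h0
    · simp [h0]
    rcases eq_or_ne (K x) ⊤ with ht | ht
    · -- K x = ⊤ : x ∈ E' j for all j, and sup of 2^(j+1) is ⊤
      have hx : ∀ j : ℤ, x ∈ E' j := by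
        intro j
        exact hmemE' x j fun i _ => by simp [ht, ENNReal.zpow_lt_top two_ne_zero ENNReal.ofNat_ne_top]
      rw [ht]
      by_contra h
      push_neg at h
      obtain ⟨m, hm⟩ := ENNReal.exists_nat_gt h.ne_top
      have hb : ((m:ℝ≥0∞)) ≤ (2:ℝ≥0∞) ^ ((m:ℤ)+1) := by
        have hn : (m:ℕ) ≤ 2 ^ (m+1) :=
          (Nat.lt_two_pow_self (n := m)).le.trans (Nat.pow_le_pow_right (by norm_num) (Nat.le_succ m))
        have h2 : ((m:ℝ≥0∞)) ≤ (2:ℝ≥0∞) ^ (m+1:ℕ) := by exact_mod_cast hn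
        rwa [show ((m:ℤ)+1) = ((m+1:ℕ):ℤ) by push_cast; ring, zpow_natCast]
      have h1 : ((m:ℝ≥0∞)) ≤ ⨆ j : ℤ, (E' j).indicator (fun _ => (2:ℝ≥0∞) ^ (j+1)) x := by
        refine le_trans hb (le_trans ?_ (le_iSup _ (m : ℤ)))
        rw [Set.indicator_of_mem (hx m)]
      exact absurd (lt_of_le_of_lt h1 hm) (lt_irrefl _)
    · obtain ⟨j, hj1, hj2⟩ := ENNReal.exists_mem_Ioc_zpow h0 ht ENNReal.one_lt_two ENNReal.ofNat_ne_top
      have hx : x ∈ E' j := hmemE' x j fun i hi =>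
        lt_of_le_of_lt (ENNReal.zpow_le_of_le one_le_two hi) hj1
      refine le_trans hj2 (le_trans ?_ (le_iSup _ j))
      rw [Set.indicator_of_mem hx]
  · intro β hβ0 hβt
    obtain ⟨j₀, hj₀1, hj₀2⟩ := ENNReal.exists_mem_Ioc_zpow hβ0 hβt ENNReal.one_lt_two ENNReal.ofNat_ne_top
    have hsub : {x | β < ⨆ j : ℤ, (E' j).indicator (fun _ => (2:ℝ≥0∞) ^ (j+1)) x} ⊆ E' j₀ := by
      intro x hx
      simp only [Set.mem_setOf_eq, lt_iSup_iff] at hx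
      obtain ⟨j, hj⟩ := hx
      have hmem : x ∈ E' j := by
        by_contra h
        rw [Set.indicator_of_notMem h] at hj
        exact absurd hj (by simp)
      rw [Set.indicator_of_mem hmem] at hj
      have hjj : j₀ ≤ j := by
        by_contra h
        push_neg at h
        have : (j:ℤ) + 1 ≤ j₀ := by omega
        have h2 : (2:ℝ≥0∞) ^ (j+1) ≤ 2 ^ j₀ := ENNReal.zpow_le_of_le one_le_two this
        exact absurd (lt_of_le_of_lt h2 hj₀1) (not_lt.2 hj.le)
      exact hE'mono hjj hmem
    calc μ _ ≤ μ (E' j₀) := measure_mono hsub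
      _ ≤ μ {x | (2:ℝ≥0∞) ^ j₀ < K x} := by
          rw [← measure_toMeasurable {x | (2:ℝ≥0∞) ^ j₀ < K x}]
          exact measure_mono (hE'sub j₀)
      _ ≤ μ {x | β / 2 < K x} := by
          refine measure_mono fun x hx => ?_
          simp only [Set.mem_setOf_eq] at hx ⊢
          refine lt_of_le_of_lt ?_ hx
          rw [ENNReal.div_le_iff_le_mul (Or.inl two_ne_zero) (Or.inl ENNReal.ofNat_ne_top)]
          calc β ≤ 2 ^ (j₀+1) := hj₀2
            _ = 2 ^ j₀ * 2 := by rw [ENNReal.zpow_add two_ne_zero ENNReal.ofNat_ne_top, zpow_one]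

lemma trunc_tail_bound {X : Type*} [MeasurableSpace X] (μ : Measure X) (p : ℝ) (hp : 1 < p)
    {G : X → ℝ≥0∞} (hG : Measurable G) {B : ℝ≥0∞} (hB : B ≠ ⊤)
    (hdist : ∀ β : ℝ≥0∞, β ≠ 0 → β ≠ ⊤ → μ {x | β < G x} ≤ B * β ^ (-p))
    {M : ℝ≥0∞} (hM0 : M ≠ 0) (hMt : M ≠ ⊤) :
    ∫⁻ x in {x | M < G x}, G x ∂μ ≤
      2 * (1 - (2:ℝ≥0∞)^(1-p))⁻¹ * B * M ^ (1-p) := by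
  have hp0 : (0:ℝ) < p := lt_trans one_pos hp
  -- the set where G = ⊤ is null
  have hnull : μ {x | G x = ⊤} = 0 := by
    rcases eq_or_ne B 0 with hB0 | hB0
    · have := hdist 1 one_ne_zero ENNReal.one_ne_top
      rw [hB0, zero_mul] at this
      refine le_antisymm (le_trans (measure_mono ?_) this) zero_le
      intro x hx; simp only [Set.mem_setOf_eq] at hx ⊢; simp [hx]
    · refine le_antisymm ?_ zero_le
      refine ENNReal.le_of_forall_pos_le_add fun ε hε _ => ?_
      rw [zero_add]
      set β : ℝ≥0∞ := (B / ε) ^ (1/p) + 1 with hβ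
      have hβ0 : β ≠ 0 := by simp [hβ]
      have hβt : β ≠ ⊤ := by
        rw [hβ]
        refine ENNReal.add_ne_top.2 ⟨?_, ENNReal.one_ne_top⟩
        exact ENNReal.rpow_ne_top_of_nonneg (by positivity)
          (ENNReal.div_lt_top hB (ENNReal.coe_ne_zero.2 hε.ne')).ne
      have h1 : μ {x | G x = ⊤} ≤ B * β ^ (-p) := by
        refine le_trans (measure_mono ?_) (hdist β hβ0 hβt)
        intro x hx; simp only [Set.mem_setOf_eq] at hx ⊢
        rw [hx]; exact hβt.lt_top
      refine le_trans h1 ?_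
      have h2 : (B / ε) ≤ β ^ p := by
        calc B / ε = ((B/ε) ^ (1/p)) ^ p := by
              rw [← ENNReal.rpow_mul, one_div, inv_mul_cancel₀ hp0.ne', ENNReal.rpow_one]
          _ ≤ β ^ p := ENNReal.rpow_le_rpow (by rw [hβ]; exact le_self_add) hp0.le
      have h3 : β ^ (-p) ≤ ε / B := by
        rw [ENNReal.rpow_neg,
          ← ENNReal.inv_div (Or.inl ENNReal.coe_ne_top) (Or.inl (ENNReal.coe_ne_zero.2 hε.ne'))]
        exact ENNReal.inv_le_inv.2 h2
      calc B * β ^ (-p) ≤ B * (ε / B) := by gcongr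
        _ ≤ ε := ENNReal.mul_div_le
  -- dyadic decomposition
  set S : ℕ → Set X := fun j => {x | M * 2 ^ j < G x ∧ G x ≤ M * 2 ^ (j+1)} with hS
  have hcover : {x | M < G x} ⊆ {x | G x = ⊤} ∪ ⋃ j : ℕ, S j := by
    intro x hx
    simp only [Set.mem_setOf_eq] at hx
    rcases eq_or_ne (G x) ⊤ with ht | ht
    · exact Or.inl ht
    · refine Or.inr ?_
      have hex : ∃ n : ℕ, G x ≤ M * 2 ^ (n+1) := by
        obtain ⟨n, hn⟩ := ENNReal.exists_nat_gt (ENNReal.div_lt_top ht hM0).ne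
        refine ⟨n, ?_⟩
        have h1 : G x ≤ (n:ℝ≥0∞) * M :=
          (ENNReal.div_le_iff_le_mul (Or.inl hM0) (Or.inl hMt)).1 hn.le
        refine le_trans (h1.trans (le_of_eq (mul_comm _ _))) ?_
        gcongr
        calc (n:ℝ≥0∞) ≤ 2^n := by exact_mod_cast (Nat.lt_two_pow_self (n := n)).le
          _ ≤ 2^(n+1) := pow_le_pow_right₀ one_le_two (Nat.le_succ n)
      classical
      set n₀ := Nat.find hex with hn₀def
      have hn₀ : G x ≤ M * 2 ^ (n₀ + 1) := Nat.find_spec hex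
      refine Set.mem_iUnion.2 ⟨n₀, ?_, hn₀⟩
      rcases Nat.eq_zero_or_pos n₀ with h0 | hpos
      · rw [h0]; simpa using hx
      · obtain ⟨m, hm⟩ := Nat.exists_eq_succ_of_ne_zero hpos.ne'
        have hmin := Nat.find_min hex (m := m) (by omega)
        push_neg at hmin
        rw [hm]
        exact hmin
  have hterm : ∀ j : ℕ, M * 2^(j+1) * (B * (M * 2^j)^(-p)) =
      (2*B*M^(1-p)) * ((2:ℝ≥0∞)^(1-p))^j := by
    intro j
    have h2j : ((2:ℝ≥0∞)^j : ℝ≥0∞)^(-p) = (2:ℝ≥0∞) ^ ((j:ℝ)*(-p)) := by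
      rw [← ENNReal.rpow_natCast 2 j, ← ENNReal.rpow_mul]
    have hM' : M * M^(-p) = M^(1-p) := by
      nth_rewrite 1 [← ENNReal.rpow_one M]
      rw [← ENNReal.rpow_add _ _ hM0 hMt, show (1:ℝ) + -p = 1 - p by ring]
    have h2' : (2:ℝ≥0∞) ^ (j:ℝ) * 2 ^ ((j:ℝ)*(-p)) = ((2:ℝ≥0∞)^(1-p))^j := by
      rw [← ENNReal.rpow_add _ _ two_ne_zero ENNReal.ofNat_ne_top,
          show (j:ℝ) + (j:ℝ)*(-p) = (1-p)*(j:ℝ) by ring, ENNReal.rpow_mul,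
          ENNReal.rpow_natCast]
    calc M * 2^(j+1) * (B * (M * 2^j)^(-p))
        = M * (2^j * 2) * (B * (M^(-p) * ((2:ℝ≥0∞)^j)^(-p))) := by
          rw [pow_succ, ENNReal.mul_rpow_of_ne_top hMt (ENNReal.pow_ne_top ENNReal.ofNat_ne_top)]
      _ = (2*B) * ((M * M^(-p)) * (2^j * ((2:ℝ≥0∞)^j)^(-p))) := by ring
      _ = (2*B) * (M^(1-p) * (2^j * (2:ℝ≥0∞) ^ ((j:ℝ)*(-p)))) := by rw [hM', h2j]
      _ = (2*B) * (M^(1-p) * ((2:ℝ≥0∞) ^ (j:ℝ) * (2:ℝ≥0∞) ^ ((j:ℝ)*(-p)))) := by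
          rw [ENNReal.rpow_natCast]
      _ = (2*B) * (M^(1-p) * ((2:ℝ≥0∞)^(1-p))^j) := by rw [h2']
      _ = (2*B*M^(1-p)) * ((2:ℝ≥0∞)^(1-p))^j := by ring
  calc ∫⁻ x in {x | M < G x}, G x ∂μ
      ≤ ∫⁻ x in ({x | G x = ⊤} ∪ ⋃ j, S j), G x ∂μ := lintegral_mono_set hcover
    _ ≤ ∫⁻ x in {x | G x = ⊤}, G x ∂μ + ∫⁻ x in ⋃ j, S j, G x ∂μ := lintegral_union_le _ _ _
    _ = ∫⁻ x in ⋃ j, S j, G x ∂μ := by rw [setLIntegral_measure_zero _ _ hnull, zero_add]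
    _ ≤ ∑' j, ∫⁻ x in S j, G x ∂μ := lintegral_iUnion_le _ _
    _ ≤ ∑' j : ℕ, M * 2^(j+1) * (B * (M * 2^j)^(-p)) := by
        refine ENNReal.tsum_le_tsum fun j => ?_
        calc ∫⁻ x in S j, G x ∂μ ≤ ∫⁻ _x in S j, M * 2^(j+1) ∂μ :=
              setLIntegral_mono measurable_const fun x hx => hx.2
          _ = M * 2^(j+1) * μ (S j) := setLIntegral_const _ _
          _ ≤ M * 2^(j+1) * (B * (M * 2^j)^(-p)) := by
              gcongr
              refine le_trans (measure_mono fun x hx => hx.1) ?_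
              exact hdist _ (mul_ne_zero hM0 (pow_ne_zero _ two_ne_zero))
                (ENNReal.mul_ne_top hMt (ENNReal.pow_ne_top ENNReal.ofNat_ne_top))
    _ = ∑' j : ℕ, (2*B*M^(1-p)) * ((2:ℝ≥0∞)^(1-p))^j := tsum_congr hterm
    _ = (2*B*M^(1-p)) * (1 - (2:ℝ≥0∞)^(1-p))⁻¹ := by
        rw [ENNReal.tsum_mul_left, ENNReal.tsum_geometric]
    _ = 2 * (1 - (2:ℝ≥0∞)^(1-p))⁻¹ * B * M^(1-p) := by ring

/-- Weak Young inequality on ℝⁿ: if `k ∈ L^{p,∞}(ℝⁿ)`, `1 < p < ∞`, and `f ∈ L¹(ℝⁿ)`,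
then `‖k * f‖_{L^{p,∞}} ≤ C ‖k‖_{L^{p,∞}} ‖f‖_{L¹}` with `C` depending only on `p`. -/
theorem weak_young_Rn (p : ℝ) (hp : 1 < p) :
    ∃ C : ℝ≥0∞, C ≠ ⊤ ∧ ∀ (n : ℕ) (k f : (Fin n → ℝ) → ℂ),
      wnorm volume p k ≠ ⊤ → Integrable f volume →
      wnorm volume p (fun x => ∫ y, k y * f (x - y)) ≤
        C * wnorm volume p k * eLpNorm f 1 volume := by
  have hp0 : (0:ℝ) < p := lt_trans one_pos hp
  set r : ℝ≥0∞ := (2:ℝ≥0∞) ^ (1-p) with hr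
  have hr1 : r < 1 := by
    have := ENNReal.rpow_lt_rpow_of_exponent_lt (x := 2) ENNReal.one_lt_two
      ENNReal.ofNat_ne_top (by linarith : (1:ℝ)-p < 0)
    simpa [ENNReal.rpow_zero] using this
  have hrinv : (1 - r)⁻¹ ≠ ⊤ := by
    rw [Ne, ENNReal.inv_eq_top, tsub_eq_zero_iff_le]
    exact not_le.2 hr1
  set D : ℝ≥0∞ := 2^(2*p+1) * (1-r)⁻¹ with hD
  have hD_ne : D ≠ ⊤ := ENNReal.mul_ne_top
    (ENNReal.rpow_ne_top_of_nonneg (by linarith) ENNReal.ofNat_ne_top) hrinv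
  refine ⟨D ^ (1/p), ENNReal.rpow_ne_top_of_nonneg (by positivity) hD_ne, ?_⟩
  intro n k f hk hf
  set A := wnorm volume p k with hA
  set L := eLpNorm f 1 volume with hL
  have hLt : L ≠ ⊤ := (memLp_one_iff_integrable.2 hf).2.ne
  by_cases hL0 : L = 0
  · -- trivial case f = 0 a.e.
    have hf0 : f =ᵐ[volume] 0 := (eLpNorm_eq_zero_iff hf.1 one_ne_zero).1 hL0
    have hconv0 : ∀ x : Fin n → ℝ, (∫ y, k y * f (x - y)) = 0 := by
      intro x
      have hq := (Measure.measurePreserving_sub_left volume x).quasiMeasurePreserving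
      have h0 : volume {z | ¬ f z = (0 : ℂ)} = 0 := by
        exact ae_iff.1 hf0
      have h1 : ∀ᵐ y ∂(volume : Measure (Fin n → ℝ)), f (x - y) = 0 := by
        rw [ae_iff]
        simpa using hq.preimage_null h0
      refine integral_eq_zero_of_ae ?_
      filter_upwards [h1] with y hy
      simp [hy]
    have hwz : wnorm volume p (fun x : Fin n → ℝ => ∫ y, k y * f (x - y)) = 0 := by
      rw [wnorm]
      refine le_antisymm (iSup_le fun α => ?_) zero_le
      have hset : {x : Fin n → ℝ | (α:ℝ) < ‖∫ y, k y * f (x-y)‖} = ∅ := by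
        ext x
        simp [hconv0 x, not_lt.2 (α.coe_nonneg)]
      rw [hset, measure_empty, ENNReal.zero_rpow_of_pos (by positivity : 0 < 1/p), mul_zero]
    rw [hwz]
    exact zero_le
  -- main case
  have hA_ne : A ≠ ⊤ := hk
  set f' := hf.1.mk f with hf'def
  have hf'sm : StronglyMeasurable f' := hf.1.stronglyMeasurable_mk
  have hff' : f =ᵐ[volume] f' := hf.1.ae_eq_mk
  have hf'm : Measurable f' := hf'sm.measurable
  have htrans : ∀ x : Fin n → ℝ, ∀ᵐ y ∂(volume : Measure (Fin n → ℝ)),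
      f (x - y) = f' (x - y) := by
    intro x
    have hq := (Measure.measurePreserving_sub_left volume x).quasiMeasurePreserving
    have h0 : volume {z | ¬ f z = f' z} = 0 := ae_iff.1 hff'
    rw [ae_iff]
    simpa using hq.preimage_null h0
  have hconv_eq : ∀ x : Fin n → ℝ, (∫ y, k y * f (x - y)) = ∫ y, k y * f' (x - y) :=
    fun x => integral_congr_ae ((htrans x).mono fun y hy => by simp [hy])
  have hLf' : ∫⁻ y, (‖f' y‖₊ : ℝ≥0∞) ∂volume = L := by
    rw [hL, eLpNorm_one_eq_lintegral_enorm]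
    exact (lintegral_congr_ae (hff'.mono fun y hy => by simp [hy, enorm_eq_nnnorm])).symm
  set K : (Fin n → ℝ) → ℝ≥0∞ := fun y => (‖k y‖₊ : ℝ≥0∞) with hKdef
  have hdistK : ∀ γ : ℝ≥0∞, γ ≠ 0 → γ ≠ ⊤ → volume {x | γ < K x} ≤ (A / γ) ^ p := by
    intro γ hγ0 hγt
    set c : ℝ≥0 := γ.toNNReal with hc
    have hγc : γ = (c : ℝ≥0∞) := (ENNReal.coe_toNNReal hγt).symm
    have hc0 : (c : ℝ≥0∞) ≠ 0 := hγc ▸ hγ0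
    have hseteq : {x | γ < K x} = {x | (c:ℝ) < ‖k x‖} := by
      ext x
      rw [hγc]
      simp only [Set.mem_setOf_eq, hKdef, ENNReal.coe_lt_coe, ← NNReal.coe_lt_coe, coe_nnnorm]
    have hwn : (c:ℝ≥0∞) * volume {x | (c:ℝ) < ‖k x‖} ^ (1/p) ≤ A :=
      le_iSup (fun α : ℝ≥0 => (α:ℝ≥0∞) * volume {x | (α:ℝ) < ‖k x‖}^(1/p)) c
    have h2 : volume {x | (c:ℝ) < ‖k x‖} ^ (1/p) ≤ A / γ := by
      rw [hγc, ENNReal.le_div_iff_mul_le (Or.inl hc0) (Or.inl ENNReal.coe_ne_top), mul_comm]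
      exact hwn
    calc volume {x | γ < K x} = (volume {x | (c:ℝ) < ‖k x‖} ^ (1/p)) ^ p := by
          rw [hseteq, ← ENNReal.rpow_mul, one_div, inv_mul_cancel₀ hp0.ne', ENNReal.rpow_one]
      _ ≤ (A / γ) ^ p := ENNReal.rpow_le_rpow h2 hp0.le
  obtain ⟨G, hGmeas, hKG, hGdist⟩ := exists_majorant volume K
  set B : ℝ≥0∞ := 2^p * A^p with hB
  have hB_ne : B ≠ ⊤ := ENNReal.mul_ne_top
    (ENNReal.rpow_ne_top_of_nonneg hp0.le ENNReal.ofNat_ne_top)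
    (ENNReal.rpow_ne_top_of_nonneg hp0.le hA_ne)
  have hdistG : ∀ β : ℝ≥0∞, β ≠ 0 → β ≠ ⊤ → volume {x | β < G x} ≤ B * β ^ (-p) := by
    intro β hβ0 hβt
    have hhalf0 : β / 2 ≠ 0 := by
      simp [ENNReal.div_eq_zero_iff, hβ0, ENNReal.ofNat_ne_top]
    have hhalft : β / 2 ≠ ⊤ := (ENNReal.div_lt_top hβt two_ne_zero).ne
    refine le_trans (hGdist β hβ0 hβt) (le_trans (hdistK (β/2) hhalf0 hhalft) (le_of_eq ?_))
    have h1 : A / (β/2) = 2 * A * β⁻¹ := by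
      rw [ENNReal.div_eq_inv_mul, ENNReal.inv_div (Or.inl ENNReal.ofNat_ne_top) (Or.inl two_ne_zero)]
      rw [ENNReal.div_eq_inv_mul, mul_comm ((β:ℝ≥0∞)⁻¹) 2, mul_comm]
      ring
    rw [h1]
    rw [ENNReal.mul_rpow_of_ne_top (ENNReal.mul_ne_top ENNReal.ofNat_ne_top hA_ne)
        (by simpa using hβ0 : (β⁻¹ : ℝ≥0∞) ≠ ⊤),
      ENNReal.mul_rpow_of_ne_top ENNReal.ofNat_ne_top hA_ne,
      ENNReal.inv_rpow, ← ENNReal.rpow_neg]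
  -- unfold the weak norm of the convolution
  rw [wnorm]
  refine iSup_le fun α => ?_
  rcases eq_or_ne α 0 with hα0 | hα0
  · simp [hα0]
  have hαe0 : (α:ℝ≥0∞) ≠ 0 := by exact_mod_cast hα0
  have hαet : (α:ℝ≥0∞) ≠ ⊤ := ENNReal.coe_ne_top
  set αe : ℝ≥0∞ := (α:ℝ≥0∞) with hαe
  set M : ℝ≥0∞ := αe / (2 * L) with hM
  have hM0 : M ≠ 0 := by
    simp [hM, ENNReal.div_eq_zero_iff, hαe0, ENNReal.mul_ne_top ENNReal.ofNat_ne_top hLt]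
  have hMt : M ≠ ⊤ := (ENNReal.div_lt_top hαet (by simp [hL0])).ne
  set G₂ : (Fin n → ℝ) → ℝ≥0∞ := {y | M < G y}.indicator G with hG₂
  have hG₂meas : Measurable G₂ := hGmeas.indicator (measurableSet_lt measurable_const hGmeas)
  set H₂ : (Fin n → ℝ) → ℝ≥0∞ := fun x => ∫⁻ y, G₂ y * ‖f' (x - y)‖₊ with hH₂
  have hjoint : Measurable fun q : (Fin n → ℝ) × (Fin n → ℝ) =>
      G₂ q.2 * (‖f' (q.1 - q.2)‖₊ : ℝ≥0∞) :=
    (hG₂meas.comp measurable_snd).mul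
      ((measurable_coe_nnreal_ennreal.comp hf'm.nnnorm).comp (measurable_fst.sub measurable_snd))
  have hH₂meas : Measurable H₂ := hjoint.lintegral_prod_right'
  have hML : M * L = αe / 2 := by
    rw [hM, div_eq_mul_inv, ENNReal.mul_inv (Or.inl two_ne_zero) (Or.inl ENNReal.ofNat_ne_top),
      mul_assoc, mul_assoc, ENNReal.inv_mul_cancel hL0 hLt, mul_one, ← div_eq_mul_inv]
  have hpoint : ∀ x, (‖∫ y, k y * f (x - y)‖₊ : ℝ≥0∞) ≤ αe/2 + H₂ x := by
    intro x
    have hmy : Measurable fun y : Fin n → ℝ => (‖f' (x - y)‖₊ : ℝ≥0∞) :=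
      (measurable_coe_nnreal_ennreal.comp hf'm.nnnorm).comp (measurable_const.sub measurable_id)
    rw [hconv_eq x]
    calc (‖∫ y, k y * f' (x - y)‖₊ : ℝ≥0∞)
        ≤ ∫⁻ y, ‖k y * f' (x - y)‖₊ ∂volume := enorm_integral_le_lintegral_enorm _
      _ ≤ ∫⁻ y, (min (G y) M + G₂ y) * ‖f' (x - y)‖₊ ∂volume := by
          refine lintegral_mono fun y => ?_
          rw [nnnorm_mul, ENNReal.coe_mul]
          gcongr
          rcases le_or_gt (G y) M with hle | hlt
          · refine le_trans (hKG y) ?_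
            rw [min_eq_left hle]
            exact le_self_add
          · refine le_trans (hKG y) ?_
            rw [hG₂, Set.indicator_of_mem (by exact hlt : y ∈ {y | M < G y})]
            exact le_add_self
      _ = (∫⁻ y, min (G y) M * ‖f' (x - y)‖₊ ∂volume) + H₂ x := by
          simp only [add_mul]
          rw [lintegral_add_left (by exact (hGmeas.min measurable_const).mul hmy :
            Measurable fun y => min (G y) M * (‖f' (x - y)‖₊ : ℝ≥0∞))]
      _ ≤ αe/2 + H₂ x := by
          gcongr
          calc ∫⁻ y, min (G y) M * ‖f' (x - y)‖₊ ∂volume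
              ≤ ∫⁻ y, M * ‖f' (x - y)‖₊ ∂volume := by
                refine lintegral_mono fun y => ?_
                gcongr
                exact min_le_right _ _
            _ = M * ∫⁻ y, (‖f' (x - y)‖₊:ℝ≥0∞) ∂volume := lintegral_const_mul M hmy
            _ = M * L := by
                have h1 : ∫⁻ y, (‖f' (x - y)‖₊:ℝ≥0∞) ∂volume = L := by
                  rw [← hLf']
                  exact (Measure.measurePreserving_sub_left volume x).lintegral_comp
                    (measurable_coe_nnreal_ennreal.comp hf'm.nnnorm)
                rw [h1]
            _ = αe / 2 := hML
  have hmark : volume {x | αe/2 ≤ H₂ x} ≤ (∫⁻ x, H₂ x) / (αe/2) := by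
    rw [ENNReal.le_div_iff_mul_le
      (Or.inl (by simp [ENNReal.div_eq_zero_iff, hαe0, ENNReal.ofNat_ne_top]))
      (Or.inl ((ENNReal.div_lt_top hαet two_ne_zero).ne)), mul_comm]
    exact mul_meas_ge_le_lintegral₀ hH₂meas.aemeasurable _
  have hswap : ∫⁻ x, H₂ x ∂volume = (∫⁻ y, G₂ y ∂volume) * L := by
    calc ∫⁻ x, ∫⁻ y, G₂ y * ‖f' (x - y)‖₊ ∂volume ∂volume
        = ∫⁻ y, ∫⁻ x, G₂ y * ‖f' (x - y)‖₊ ∂volume ∂volume :=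
          lintegral_lintegral_swap hjoint.aemeasurable
      _ = ∫⁻ y, G₂ y * L ∂volume := by
          refine lintegral_congr fun y => ?_
          have h1 : ∫⁻ x, (‖f' (x - y)‖₊:ℝ≥0∞) ∂volume = L := by
            rw [← hLf']
            exact (measurePreserving_sub_right volume y).lintegral_comp
              (measurable_coe_nnreal_ennreal.comp hf'm.nnnorm)
          have hmy2 : Measurable fun x : Fin n → ℝ => (‖f' (x - y)‖₊ : ℝ≥0∞) :=
            (measurable_coe_nnreal_ennreal.comp hf'm.nnnorm).comp
              (measurable_id.sub measurable_const)
          rw [lintegral_const_mul _ hmy2, h1]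
      _ = (∫⁻ y, G₂ y ∂volume) * L := lintegral_mul_const L hG₂meas
  have hG₂int : ∫⁻ y, G₂ y ∂volume ≤ 2 * (1-r)⁻¹ * B * M^(1-p) := by
    rw [hG₂, lintegral_indicator (measurableSet_lt measurable_const hGmeas)]
    exact trunc_tail_bound volume p hp hGmeas hB_ne hdistG hM0 hMt
  have hsub2 : {x : Fin n → ℝ | (α:ℝ) < ‖∫ y, k y * f (x - y)‖} ⊆ {x | αe/2 ≤ H₂ x} := by
    intro x hx
    simp only [Set.mem_setOf_eq] at hx ⊢
    have h1 : αe < (‖∫ y, k y * f (x - y)‖₊ : ℝ≥0∞) := by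
      rw [hαe, ENNReal.coe_lt_coe, ← NNReal.coe_lt_coe, coe_nnnorm]
      exact hx
    by_contra hcon
    push_neg at hcon
    have h2 := lt_of_lt_of_le h1 (hpoint x)
    have h3 : αe/2 + H₂ x < αe/2 + αe/2 := by
      exact ENNReal.add_lt_add_left (by simp [ENNReal.div_eq_top, hαet]) hcon
    rw [ENNReal.add_halves] at h3
    exact absurd (lt_trans h2 h3) (lt_irrefl _)
  -- the distributional bound
  have hfinal : volume {x : Fin n → ℝ | (α:ℝ) < ‖∫ y, k y * f (x - y)‖} ≤
      D * A^p * L^p * αe^(-p) := by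
    have hMinv : M⁻¹ = 2 * L * αe⁻¹ := by
      rw [hM, ENNReal.inv_div (Or.inl (ENNReal.mul_ne_top ENNReal.ofNat_ne_top hLt))
        (Or.inl (by simp [hL0]))]
      rw [ENNReal.div_eq_inv_mul, mul_comm]
    have hMpow : M^(1-p) = 2^(p-1) * L^(p-1) * αe^(1-p) := by
      rw [show (1:ℝ)-p = -(p-1) by ring, ENNReal.rpow_neg, ← ENNReal.inv_rpow, hMinv,
        ENNReal.mul_rpow_of_ne_top (ENNReal.mul_ne_top ENNReal.ofNat_ne_top hLt)
          (by simpa using hαe0 : (αe⁻¹:ℝ≥0∞) ≠ ⊤),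
        ENNReal.mul_rpow_of_ne_top ENNReal.ofNat_ne_top hLt,
        ENNReal.inv_rpow, ← ENNReal.rpow_neg, show -(p-1) = 1-p by ring]
    have h2pow : (2:ℝ≥0∞) * 2^p * 2^(p-1) * 2 = 2^(2*p+1) := by
      rw [show (2*p+1 : ℝ) = 1 + p + (p-1) + 1 by ring,
        ENNReal.rpow_add _ _ two_ne_zero ENNReal.ofNat_ne_top,
        ENNReal.rpow_add _ _ two_ne_zero ENNReal.ofNat_ne_top,
        ENNReal.rpow_add _ _ two_ne_zero ENNReal.ofNat_ne_top,
        ENNReal.rpow_one]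
    have hLpow : L^(p-1) * L = L^p := by
      nth_rewrite 2 [← ENNReal.rpow_one L]
      rw [← ENNReal.rpow_add _ _ hL0 hLt]
      congr 1
      ring
    have hαpow : αe^(1-p) * αe⁻¹ = αe^(-p) := by
      rw [← ENNReal.rpow_neg_one, ← ENNReal.rpow_add _ _ hαe0 hαet]
      congr 1
      ring
    calc volume {x : Fin n → ℝ | (α:ℝ) < ‖∫ y, k y * f (x - y)‖}
        ≤ volume {x | αe/2 ≤ H₂ x} := measure_mono hsub2
      _ ≤ (∫⁻ x, H₂ x) / (αe/2) := hmark
      _ ≤ ((2 * (1-r)⁻¹ * B * M^(1-p)) * L) / (αe/2) := by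
          rw [hswap]
          gcongr
      _ = ((2 * (1-r)⁻¹ * B * M^(1-p)) * L) * (2 * αe⁻¹) := by
          rw [div_eq_mul_inv, ENNReal.inv_div (Or.inl ENNReal.ofNat_ne_top) (Or.inl two_ne_zero),
            ENNReal.div_eq_inv_mul, mul_comm ((αe:ℝ≥0∞)⁻¹) 2]
      _ = D * A^p * L^p * αe^(-p) := by
          rw [hB, hMpow]
          rw [show (2 * (1-r)⁻¹ * (2^p * A^p) * (2^(p-1) * L^(p-1) * αe^(1-p)) * L) * (2 * αe⁻¹)
            = ((2 * 2^p * 2^(p-1) * 2) * (1-r)⁻¹) * A^p * (L^(p-1) * L) * (αe^(1-p) * αe⁻¹)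
            from by ring, h2pow, hLpow, hαpow, hD]
  -- conclude
  have hpow_ne_top : ∀ z : ℝ≥0∞, z ≠ ⊤ → z ^ p ≠ ⊤ :=
    fun z hz => ENNReal.rpow_ne_top_of_nonneg hp0.le hz
  calc αe * volume {x : Fin n → ℝ | (α:ℝ) < ‖∫ y, k y * f (x - y)‖} ^ (1/p)
      ≤ αe * (D * A^p * L^p * αe^(-p)) ^ (1/p) := by
        gcongr
    _ = αe * (D^(1/p) * A * L * αe⁻¹) := by
        rw [ENNReal.mul_rpow_of_ne_top
            (ENNReal.mul_ne_top (ENNReal.mul_ne_top hD_ne (hpow_ne_top A hA_ne)) (hpow_ne_top L hLt))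
            (by simp [ENNReal.rpow_eq_top_iff, hαe0, hαet] : (αe^(-p):ℝ≥0∞) ≠ ⊤),
          ENNReal.mul_rpow_of_ne_top (ENNReal.mul_ne_top hD_ne (hpow_ne_top A hA_ne))
            (hpow_ne_top L hLt),
          ENNReal.mul_rpow_of_ne_top hD_ne (hpow_ne_top A hA_ne),
          ← ENNReal.rpow_mul A, ← ENNReal.rpow_mul L, ← ENNReal.rpow_mul αe,
          mul_one_div, div_self hp0.ne', ENNReal.rpow_one, ENNReal.rpow_one,
          show -p * (1/p) = -1 by field_simp, ENNReal.rpow_neg_one]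
    _ = (αe * αe⁻¹) * (D^(1/p) * A * L) := by ring
    _ = D^(1/p) * A * L := by rw [ENNReal.mul_inv_cancel hαe0 hαet, one_mul]
end

section
/- Let $1 < p < \infty$ and let $k : \mathbb{Z}^n \to \mathbb{C}$. The discrete convolution operator $(tf)(s) = \sum_{n' \in \mathbb{Z}^n} k(s - n') f(n')$ is bounded from $\ell^1(\mathbb{Z}^n)$ to $\ell^{p,\infty}(\mathbb{Z}^n)$ if and only if $k \in \ell^{p,\infty}(\mathbb{Z}^n)$. -/
open MeasureTheory
open scoped NNReal ENNReal

open scoped Classical in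
/-- Pointwise dyadic layer-cake bound. -/
lemma aux_layer (x β : ℝ≥0) (hβ : 0 < β) :
    (x : ℝ≥0∞) ≤ (β : ℝ≥0∞) +
      ∑' j : ℕ, (if 2 ^ j * β < x then ((2 ^ (j + 1) * β : ℝ≥0) : ℝ≥0∞) else 0) := by
  rcases le_or_gt x β with hx | hx
  · exact le_add_right (by exact_mod_cast hx)
  · have hex : ∃ j : ℕ, x ≤ 2 ^ (j + 1) * β := by
      obtain ⟨j, hj⟩ := pow_unbounded_of_one_lt (x / β) (one_lt_two (α := ℝ≥0))
      refine ⟨j, ?_⟩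
      have : x < 2 ^ j * β := by rwa [div_lt_iff₀ hβ] at hj
      calc x ≤ 2 ^ j * β := this.le
        _ ≤ 2 ^ (j + 1) * β := by gcongr; exact one_le_two; omega
    set J := Nat.find hex with hJdef
    have hJ1 : x ≤ 2 ^ (J + 1) * β := Nat.find_spec hex
    have hJ2 : 2 ^ J * β < x := by
      rcases Nat.eq_zero_or_pos J with h0 | h0
      · simpa [h0] using hx
      · have h2 : 2 ^ (J - 1 + 1) * β < x := not_le.mp (Nat.find_min hex (by omega : J - 1 < J))
        rwa [Nat.sub_add_cancel h0] at h2
    calc (x : ℝ≥0∞) ≤ ((2 ^ (J + 1) * β : ℝ≥0) : ℝ≥0∞) := by exact_mod_cast hJ1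
      _ = (if 2 ^ J * β < x then ((2 ^ (J + 1) * β : ℝ≥0) : ℝ≥0∞) else 0) := by rw [if_pos hJ2]
      _ ≤ ∑' j : ℕ, (if 2 ^ j * β < x then ((2 ^ (j + 1) * β : ℝ≥0) : ℝ≥0∞) else 0) :=
          ENNReal.le_tsum J
      _ ≤ _ := le_add_self

/-- The distribution function bound coming from the weak norm. -/
lemma aux_dist {G : Type*} [MeasurableSpace G] (k : G → ℂ) {p : ℝ} (hp : 1 < p)
    {M₀ : ℝ≥0}
    (h : ∀ α : ℝ≥0, (α : ℝ≥0∞) * Measure.count {s | (α : ℝ) < ‖k s‖} ^ (1 / p) ≤ (M₀ : ℝ≥0∞))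
    {α : ℝ≥0} (hα : 0 < α) :
    Measure.count {s | (α : ℝ) < ‖k s‖} ≤ ((M₀ / α : ℝ≥0) : ℝ≥0∞) ^ (p : ℝ) := by
  have hp0 : (0:ℝ) < p := lt_trans one_pos hp
  have h1 : Measure.count {s | (α : ℝ) < ‖k s‖} ^ (1 / p) ≤ (M₀ : ℝ≥0∞) / α := by
    rw [ENNReal.le_div_iff_mul_le (Or.inl (by exact_mod_cast hα.ne')) (Or.inl ENNReal.coe_ne_top),
      mul_comm]
    exact h α
  calc Measure.count {s | (α : ℝ) < ‖k s‖}
      = (Measure.count {s | (α : ℝ) < ‖k s‖} ^ (1 / p)) ^ (p : ℝ) := by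
        rw [← ENNReal.rpow_mul, one_div, inv_mul_cancel₀ hp0.ne', ENNReal.rpow_one]
    _ ≤ ((M₀ : ℝ≥0∞) / α) ^ (p : ℝ) := ENNReal.rpow_le_rpow h1 hp0.le
    _ = ((M₀ / α : ℝ≥0) : ℝ≥0∞) ^ (p : ℝ) := by
        rw [ENNReal.coe_div hα.ne']

/-- Algebraic identity in `ℝ≥0` for the dyadic terms. -/
lemma aux_ident (p : ℝ) (hp : 1 < p) (M₀ N' : ℝ≥0) (hM : 0 < M₀) (hN : 1 ≤ N') (j : ℕ) :
    (M₀ / (2 ^ j * (M₀ * N' ^ (-(1/p) : ℝ)))) ^ (p : ℝ) * (2 ^ (j+1) * (M₀ * N' ^ (-(1/p) : ℝ)))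
      = 2 * ((2:ℝ≥0) ^ ((1:ℝ) - p)) ^ j * (M₀ * N' ^ (1 - 1/p : ℝ)) := by
  have hp0 : (0:ℝ) < p := lt_trans one_pos hp
  have hN0 : N' ≠ 0 := by positivity
  set u : ℝ≥0 := N' ^ ((1/p) : ℝ) with hu
  have hu0 : u ≠ 0 := (NNReal.rpow_pos (lt_of_lt_of_le one_pos hN)).ne'
  have huneg : N' ^ (-(1/p) : ℝ) = u⁻¹ := by rw [NNReal.rpow_neg]
  have hup : u ^ (p : ℝ) = N' := by
    rw [hu, ← NNReal.rpow_mul, one_div, inv_mul_cancel₀ hp0.ne', NNReal.rpow_one]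
  set w : ℝ≥0 := (2:ℝ≥0) ^ j with hw
  have hw0 : w ≠ 0 := by positivity
  have hwp0 : w ^ (p:ℝ) ≠ 0 := by
    have : (0:ℝ≥0) < w := by positivity
    exact (NNReal.rpow_pos this).ne'
  have hdiv : M₀ / (w * (M₀ * u⁻¹)) = u / w := by
    field_simp
  have hpow1 : ((2:ℝ≥0) ^ ((1:ℝ) - p)) ^ j = w * (w ^ (p:ℝ))⁻¹ := by
    have h1 : ((2:ℝ≥0) ^ ((1:ℝ) - p)) ^ j = (2:ℝ≥0) ^ (((1:ℝ) - p) * j) := by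
      rw [← NNReal.rpow_natCast ((2:ℝ≥0) ^ ((1:ℝ) - p)) j, ← NNReal.rpow_mul]
    have h2 : w ^ ((1:ℝ) - p) = (2:ℝ≥0) ^ (((j:ℝ)) * ((1:ℝ) - p)) := by
      rw [hw, ← NNReal.rpow_natCast (2:ℝ≥0) j, ← NNReal.rpow_mul]
    have h3 : w ^ ((1:ℝ) - p) = w ^ (1:ℝ) * w ^ (-p) := by
      rw [← NNReal.rpow_add hw0]; ring_nf
    rw [h1, mul_comm ((1:ℝ) - p) (j:ℝ), ← h2, h3, NNReal.rpow_one, NNReal.rpow_neg]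
  have hNu : N' ^ (1 - 1/p : ℝ) = N' * u⁻¹ := by
    rw [show (1 - 1/p : ℝ) = 1 + (-(1/p)) by ring, NNReal.rpow_add hN0, NNReal.rpow_one, huneg]
  have hdivp : (u / w) ^ (p : ℝ) = N' * (w ^ (p:ℝ))⁻¹ := by
    rw [NNReal.div_rpow, hup, div_eq_mul_inv]
  rw [huneg, pow_succ, ← hw, hdiv, hdivp, hpow1, hNu]
  ring

open scoped Classical in
/-- The key estimate: sum of `‖k‖` over a finite set is controlled by `card^{1-1/p}`. -/
lemma aux_claimA {G : Type*} [MeasurableSpace G] [MeasurableSingletonClass G]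
    (k : G → ℂ) {p : ℝ} (hp : 1 < p) {M₀ : ℝ≥0} (hM : 0 < M₀)
    (h : ∀ α : ℝ≥0, (α : ℝ≥0∞) * Measure.count {s | (α : ℝ) < ‖k s‖} ^ (1 / p) ≤ (M₀ : ℝ≥0∞))
    (E : Finset G) :
    ∑ s ∈ E, (‖k s‖₊ : ℝ≥0∞) ≤
      (1 + 2 * (1 - (((2:ℝ≥0) ^ ((1:ℝ) - p) : ℝ≥0) : ℝ≥0∞))⁻¹) * M₀
        * (E.card : ℝ≥0∞) ^ (1 - 1/p : ℝ) := by
  rcases Nat.eq_zero_or_pos E.card with hE | hE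
  · rw [Finset.card_eq_zero] at hE
    simp [hE]
  set N' : ℝ≥0 := (E.card : ℝ≥0) with hN'
  have hN1 : 1 ≤ N' := by rw [hN']; exact_mod_cast hE
  have hN0 : N' ≠ 0 := by positivity
  set β : ℝ≥0 := M₀ * N' ^ (-(1/p) : ℝ) with hβdef
  have hβ : 0 < β := by
    apply mul_pos hM
    exact NNReal.rpow_pos (lt_of_lt_of_le one_pos hN1)
  set K : ℝ≥0 := M₀ * N' ^ (1 - 1/p : ℝ) with hK
  set r : ℝ≥0 := (2:ℝ≥0) ^ ((1:ℝ) - p) with hr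
  have step1 : ∑ s ∈ E, (‖k s‖₊ : ℝ≥0∞) ≤
      ∑ s ∈ E, ((β : ℝ≥0∞) +
        ∑' j : ℕ, (if 2 ^ j * β < ‖k s‖₊ then ((2 ^ (j + 1) * β : ℝ≥0) : ℝ≥0∞) else 0)) :=
    Finset.sum_le_sum fun s _ => aux_layer _ _ hβ
  have step2 : ∑ s ∈ E, ((β : ℝ≥0∞) +
        ∑' j : ℕ, (if 2 ^ j * β < ‖k s‖₊ then ((2 ^ (j + 1) * β : ℝ≥0) : ℝ≥0∞) else 0))
      = (E.card : ℝ≥0∞) * β +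
        ∑' j : ℕ, ∑ s ∈ E, (if 2 ^ j * β < ‖k s‖₊ then ((2 ^ (j + 1) * β : ℝ≥0) : ℝ≥0∞) else 0) := by
    rw [Finset.sum_add_distrib, Finset.sum_const, nsmul_eq_mul,
      Summable.tsum_finsetSum (fun s _ => ENNReal.summable)]
  have step3 : ∀ j : ℕ, ∑ s ∈ E, (if 2 ^ j * β < ‖k s‖₊ then ((2 ^ (j + 1) * β : ℝ≥0) : ℝ≥0∞) else 0)
      ≤ 2 * ((r : ℝ≥0∞)) ^ j * (K : ℝ≥0∞) := by
    intro j
    have hα : (0:ℝ≥0) < 2 ^ j * β := by positivity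
    have hsub : ((E.filter (fun s => 2 ^ j * β < ‖k s‖₊)) : Set G) ⊆
        {s | ((2 ^ j * β : ℝ≥0) : ℝ) < ‖k s‖} := by
      intro s hs
      simp only [Finset.coe_filter, Set.mem_setOf_eq] at hs ⊢
      have := hs.2
      rw [← coe_nnnorm]
      exact_mod_cast this
    have hcard : ((E.filter (fun s => 2 ^ j * β < ‖k s‖₊)).card : ℝ≥0∞)
        ≤ ((M₀ / (2 ^ j * β) : ℝ≥0) : ℝ≥0∞) ^ (p : ℝ) := by
      calc ((E.filter (fun s => 2 ^ j * β < ‖k s‖₊)).card : ℝ≥0∞)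
          = Measure.count ((E.filter (fun s => 2 ^ j * β < ‖k s‖₊)) : Set G) :=
            (Measure.count_apply_finset _).symm
        _ ≤ Measure.count {s | ((2 ^ j * β : ℝ≥0) : ℝ) < ‖k s‖} := measure_mono hsub
        _ ≤ _ := aux_dist k hp h hα
    calc ∑ s ∈ E, (if 2 ^ j * β < ‖k s‖₊ then ((2 ^ (j + 1) * β : ℝ≥0) : ℝ≥0∞) else 0)
        = ((E.filter (fun s => 2 ^ j * β < ‖k s‖₊)).card : ℝ≥0∞) * ((2 ^ (j + 1) * β : ℝ≥0) : ℝ≥0∞) := by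
          rw [← Finset.sum_filter, Finset.sum_const, nsmul_eq_mul]
      _ ≤ ((M₀ / (2 ^ j * β) : ℝ≥0) : ℝ≥0∞) ^ (p : ℝ) * ((2 ^ (j + 1) * β : ℝ≥0) : ℝ≥0∞) := by
          gcongr
      _ = (((M₀ / (2 ^ j * β)) ^ (p : ℝ) * (2 ^ (j + 1) * β) : ℝ≥0) : ℝ≥0∞) := by
          have hne : (M₀ / (2 ^ j * β)) ≠ 0 := by positivity
          conv_rhs => rw [ENNReal.coe_mul, ENNReal.coe_rpow_of_ne_zero hne]
      _ = ((2 * r ^ j * K : ℝ≥0) : ℝ≥0∞) := by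
          rw [hβdef, aux_ident p hp M₀ N' hM hN1 j]
      _ = 2 * ((r : ℝ≥0∞)) ^ j * (K : ℝ≥0∞) := by push_cast; ring
  have step4 : ∑' j : ℕ, (2 * ((r : ℝ≥0∞)) ^ j * (K : ℝ≥0∞))
      = 2 * (1 - (r : ℝ≥0∞))⁻¹ * K := by
    rw [ENNReal.tsum_mul_right]
    rw [ENNReal.tsum_mul_left, ENNReal.tsum_geometric]
  have hβN : (E.card : ℝ≥0∞) * (β : ℝ≥0∞) = (K : ℝ≥0∞) := by
    rw [hβdef, hK]
    rw [show (1 - 1/p : ℝ) = 1 + (-(1/p)) by ring, NNReal.rpow_add hN0, NNReal.rpow_one]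
    simp only [hN']
    push_cast
    ring
  calc ∑ s ∈ E, (‖k s‖₊ : ℝ≥0∞) ≤ _ := step1
    _ = _ := step2
    _ ≤ (K : ℝ≥0∞) + ∑' j : ℕ, (2 * ((r : ℝ≥0∞)) ^ j * (K : ℝ≥0∞)) := by
        rw [hβN]; gcongr with j; exact step3 j
    _ = (1 + 2 * (1 - (r : ℝ≥0∞))⁻¹) * K := by rw [step4]; ring
    _ = (1 + 2 * (1 - (r : ℝ≥0∞))⁻¹) * M₀ * (E.card : ℝ≥0∞) ^ (1 - 1/p : ℝ) := by
        rw [hK, ENNReal.coe_mul, ENNReal.coe_rpow_of_ne_zero hN0, ← mul_assoc, hN',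
          ENNReal.coe_natCast]

/-- Norm of a `tsum` of complex numbers is bounded by the `ℝ≥0∞` sum of norms. -/
lemma aux_enorm_tsum {ι : Type*} (g : ι → ℂ) :
    (‖∑' i, g i‖₊ : ℝ≥0∞) ≤ ∑' i, (‖g i‖₊ : ℝ≥0∞) := by
  by_cases hfin : ∑' i, ((‖g i‖₊ : ℝ≥0∞)) = ⊤
  · exact hfin ▸ le_top
  · have hs : Summable (fun i => ‖g i‖₊) := ENNReal.tsum_coe_ne_top_iff_summable.mp hfin
    calc (‖∑' i, g i‖₊ : ℝ≥0∞) ≤ ((∑' i, ‖g i‖₊ : ℝ≥0) : ℝ≥0∞) := by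
          exact_mod_cast nnnorm_tsum_le hs
      _ = ∑' i, ((‖g i‖₊ : ℝ≥0∞)) := ENNReal.coe_tsum hs

/-- Discrete Sobolev–Hardy–Littlewood–Stepanov theorem on ℤⁿ: the convolution operator
`(tf)(s) = ∑ k(s - n') f(n')` is bounded from `ℓ¹(ℤⁿ)` to `ℓ^{p,∞}(ℤⁿ)` if and only if
`k ∈ ℓ^{p,∞}(ℤⁿ)`. -/
theorem sobolev_hardy_littlewood_stepanov_Zn (n : ℕ) (p : ℝ) (hp : 1 < p)
    (k : (Fin n → ℤ) → ℂ) :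
    (∃ C : ℝ≥0, ∀ f : (Fin n → ℤ) → ℂ, Summable (fun m => ‖f m‖) →
        wnorm (Measure.count : Measure (Fin n → ℤ)) p (fun s => ∑' m, k (s - m) * f m)
          ≤ (C : ℝ≥0∞) * ∑' m, (‖f m‖₊ : ℝ≥0∞))
      ↔ wnorm (Measure.count : Measure (Fin n → ℤ)) p k ≠ ⊤ := by
  have hp0 : (0:ℝ) < p := lt_trans one_pos hp
  constructor
  · rintro ⟨C, hC⟩
    classical
    set f : (Fin n → ℤ) → ℂ := fun m => if m = 0 then 1 else 0 with hf
    have hfs : Summable (fun m => ‖f m‖) := by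
      apply summable_of_ne_finset_zero (s := ({0} : Finset (Fin n → ℤ)))
      intro m hm
      simp only [Finset.mem_singleton] at hm
      simp [hf, hm]
    have h1 : (fun s => ∑' m, k (s - m) * f m) = k := by
      funext s
      rw [tsum_eq_single 0 (by intro m hm; simp [hf, hm])]
      simp [hf]
    have h2 : ∑' m, ((‖f m‖₊ : ℝ≥0∞)) = 1 := by
      rw [tsum_eq_single 0 (by intro m hm; simp [hf, hm])]
      simp [hf]
    have := hC f hfs
    rw [h1, h2, mul_one] at this
    exact ne_top_of_le_ne_top ENNReal.coe_ne_top this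
  · intro hk
    set M₀ : ℝ≥0 := (wnorm (Measure.count : Measure (Fin n → ℤ)) p k).toNNReal + 1 with hM₀
    have hM : 0 < M₀ := by positivity
    have h : ∀ α : ℝ≥0, (α : ℝ≥0∞) * Measure.count {s | (α : ℝ) < ‖k s‖} ^ (1 / p)
        ≤ (M₀ : ℝ≥0∞) := by
      intro α
      calc (α : ℝ≥0∞) * Measure.count {s | (α : ℝ) < ‖k s‖} ^ (1 / p)
          ≤ wnorm (Measure.count : Measure (Fin n → ℤ)) p k :=
            le_iSup (fun α : ℝ≥0 => (α : ℝ≥0∞) *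
              Measure.count {s | (α : ℝ) < ‖k s‖} ^ (1 / p)) α
        _ = (((wnorm (Measure.count : Measure (Fin n → ℤ)) p k).toNNReal : ℝ≥0)) :=
            (ENNReal.coe_toNNReal hk).symm
        _ ≤ (M₀ : ℝ≥0∞) := by
            rw [hM₀]
            exact_mod_cast le_add_of_le_of_nonneg le_rfl zero_le_one
    set r : ℝ≥0 := (2:ℝ≥0) ^ ((1:ℝ) - p) with hrdef
    have hr1 : r < 1 := NNReal.rpow_lt_one_of_one_lt_of_neg one_lt_two (by linarith)
    set c : ℝ≥0∞ := 1 + 2 * (1 - (r : ℝ≥0∞))⁻¹ with hc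
    have h1r : (1 - (r : ℝ≥0∞)) ≠ 0 := by
      rw [Ne, tsub_eq_zero_iff_le]
      exact_mod_cast hr1.not_ge
    have hcne : c ≠ ⊤ := by
      rw [hc]
      refine ENNReal.add_ne_top.mpr ⟨ENNReal.one_ne_top, ENNReal.mul_ne_top ?_ ?_⟩
      · exact ENNReal.ofNat_ne_top
      · exact ENNReal.inv_ne_top.mpr h1r
    set C : ℝ≥0 := c.toNNReal * M₀ with hCdef
    have hCc : (C : ℝ≥0∞) = c * M₀ := by
      rw [hCdef, ENNReal.coe_mul, ENNReal.coe_toNNReal hcne]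
    refine ⟨C, fun f hfs => ?_⟩
    set L : ℝ≥0∞ := ∑' m, ((‖f m‖₊ : ℝ≥0∞)) with hL
    have hA : ∀ E : Finset (Fin n → ℤ),
        ∑ s ∈ E, (‖k s‖₊ : ℝ≥0∞) ≤ c * M₀ * (E.card : ℝ≥0∞) ^ (1 - 1/p : ℝ) :=
      fun E => aux_claimA k hp hM h E
    have key : ∀ E : Finset (Fin n → ℤ),
        (∀ s ∈ E, True) → (α : ℝ≥0) → True := fun _ _ _ => trivial
    -- main per-finset estimate
    have hkey : ∀ (α : ℝ≥0) (E : Finset (Fin n → ℤ)),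
        (∀ s ∈ E, (α : ℝ) < ‖∑' m, k (s - m) * f m‖) →
        (α : ℝ≥0∞) * ((E.card : ℝ≥0∞)) ^ ((1:ℝ)/p) ≤ (C : ℝ≥0∞) * L := by
      intro α E hEs
      have step1 : (α : ℝ≥0∞) * (E.card : ℝ≥0∞) ≤
          ∑ s ∈ E, (‖∑' m, k (s - m) * f m‖₊ : ℝ≥0∞) := by
        calc (α : ℝ≥0∞) * (E.card : ℝ≥0∞) = ∑ _s ∈ E, (α : ℝ≥0∞) := by
              rw [Finset.sum_const, nsmul_eq_mul]; ring
          _ ≤ ∑ s ∈ E, (‖∑' m, k (s - m) * f m‖₊ : ℝ≥0∞) := by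
              apply Finset.sum_le_sum
              intro s hs
              have := (hEs s hs).le
              rw [← coe_nnnorm] at this
              exact_mod_cast this
      have step2 : ∑ s ∈ E, (‖∑' m, k (s - m) * f m‖₊ : ℝ≥0∞) ≤
          ∑ s ∈ E, ∑' m, ((‖k (s - m)‖₊ : ℝ≥0∞) * (‖f m‖₊ : ℝ≥0∞)) := by
        apply Finset.sum_le_sum
        intro s _
        calc (‖∑' m, k (s - m) * f m‖₊ : ℝ≥0∞) ≤ ∑' m, ((‖k (s - m) * f m‖₊ : ℝ≥0∞)) :=
              aux_enorm_tsum _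
          _ = ∑' m, ((‖k (s - m)‖₊ : ℝ≥0∞) * (‖f m‖₊ : ℝ≥0∞)) := by
              congr 1; funext m; rw [nnnorm_mul]; push_cast; ring
      have step3 : ∑ s ∈ E, ∑' m, ((‖k (s - m)‖₊ : ℝ≥0∞) * (‖f m‖₊ : ℝ≥0∞))
          = ∑' m, ∑ s ∈ E, ((‖k (s - m)‖₊ : ℝ≥0∞) * (‖f m‖₊ : ℝ≥0∞)) :=
        (Summable.tsum_finsetSum (fun s _ => ENNReal.summable)).symm
      have step4 : ∀ m : Fin n → ℤ, ∑ s ∈ E, (‖k (s - m)‖₊ : ℝ≥0∞)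
          ≤ c * M₀ * (E.card : ℝ≥0∞) ^ (1 - 1/p : ℝ) := by
        intro m
        have hmap : ∑ s ∈ E, (‖k (s - m)‖₊ : ℝ≥0∞)
            = ∑ s ∈ E.map (Equiv.subRight m).toEmbedding, (‖k s‖₊ : ℝ≥0∞) := by
          rw [Finset.sum_map]
          rfl
        rw [hmap]
        have := hA (E.map (Equiv.subRight m).toEmbedding)
        rwa [Finset.card_map] at this
      have step5 : ∑' m, ∑ s ∈ E, ((‖k (s - m)‖₊ : ℝ≥0∞) * (‖f m‖₊ : ℝ≥0∞))
          ≤ (C : ℝ≥0∞) * L * (E.card : ℝ≥0∞) ^ (1 - 1/p : ℝ) := by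
        calc ∑' m, ∑ s ∈ E, ((‖k (s - m)‖₊ : ℝ≥0∞) * (‖f m‖₊ : ℝ≥0∞))
            = ∑' m, (∑ s ∈ E, (‖k (s - m)‖₊ : ℝ≥0∞)) * (‖f m‖₊ : ℝ≥0∞) := by
              congr 1; funext m; rw [Finset.sum_mul]
          _ ≤ ∑' m, (c * M₀ * (E.card : ℝ≥0∞) ^ (1 - 1/p : ℝ)) * (‖f m‖₊ : ℝ≥0∞) := by
              apply ENNReal.tsum_le_tsum
              intro m
              exact mul_le_mul_left (step4 m) _
          _ = (c * M₀ * (E.card : ℝ≥0∞) ^ (1 - 1/p : ℝ)) * L := by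
              rw [hL, ENNReal.tsum_mul_left]
          _ = (C : ℝ≥0∞) * L * (E.card : ℝ≥0∞) ^ (1 - 1/p : ℝ) := by
              rw [hCc]; ring
      have main : (α : ℝ≥0∞) * (E.card : ℝ≥0∞) ≤
          (C : ℝ≥0∞) * L * (E.card : ℝ≥0∞) ^ (1 - 1/p : ℝ) :=
        le_trans step1 (le_trans step2 (le_trans (le_of_eq step3) step5))
      rcases Nat.eq_zero_or_pos E.card with hE0 | hE0
      · rw [hE0]
        simp only [Nat.cast_zero]
        rw [ENNReal.zero_rpow_of_pos (by positivity), mul_zero]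
        exact zero_le
      · set Nr : ℝ≥0∞ := (E.card : ℝ≥0∞) with hNr
        have hNr0 : Nr ≠ 0 := by
          rw [hNr]; exact_mod_cast hE0.ne'
        have hNrt : Nr ≠ ⊤ := ENNReal.natCast_ne_top _
        have hexp0 : Nr ^ (1 - 1/p : ℝ) ≠ 0 := by
          rw [Ne, ENNReal.rpow_eq_zero_iff]
          push_neg
          exact ⟨fun h' => absurd h' hNr0, fun h' => absurd h' hNrt⟩
        have hexpt : Nr ^ (1 - 1/p : ℝ) ≠ ⊤ := by
          rw [Ne, ENNReal.rpow_eq_top_iff]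
          push_neg
          exact ⟨fun h' => absurd h' hNr0, fun h' => absurd h' hNrt⟩
        have hsplit : Nr = Nr ^ (1 - 1/p : ℝ) * Nr ^ ((1:ℝ)/p) := by
          rw [← ENNReal.rpow_add _ _ hNr0 hNrt]
          norm_num
        rw [← ENNReal.mul_le_mul_iff_left hexp0 hexpt]
        calc (α : ℝ≥0∞) * Nr ^ ((1:ℝ)/p) * Nr ^ (1 - 1/p : ℝ)
            = (α : ℝ≥0∞) * (Nr ^ (1 - 1/p : ℝ) * Nr ^ ((1:ℝ)/p)) := by ring
          _ = (α : ℝ≥0∞) * Nr := by rw [← hsplit]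
          _ ≤ (C : ℝ≥0∞) * L * Nr ^ (1 - 1/p : ℝ) := main
    -- conclude
    apply iSup_le
    intro α
    by_cases hα0 : α = 0
    · simp [hα0]
    have hαpos : (0:ℝ≥0) < α := pos_iff_ne_zero.mpr hα0
    set S : Set (Fin n → ℤ) := {s | (α : ℝ) < ‖∑' m, k (s - m) * f m‖} with hS
    have hcount : Measure.count S ≤ (((C : ℝ≥0∞) * L) / α) ^ (p : ℝ) := by
      rw [Measure.count_apply (S.to_countable.measurableSet), ← ENNReal.tsum_set_one, ENNReal.tsum_eq_iSup_sum]
      apply iSup_le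
      intro F
      have hsum1 : ∑ _a ∈ F, (1:ℝ≥0∞) = (F.card : ℝ≥0∞) := by
        rw [Finset.sum_const, nsmul_eq_mul, mul_one]
      set E := F.map (Function.Embedding.subtype _) with hE
      have hEcard : E.card = F.card := Finset.card_map _
      have hmem : ∀ s ∈ E, (α : ℝ) < ‖∑' m, k (s - m) * f m‖ := by
        intro s hs
        rw [hE, Finset.mem_map] at hs
        obtain ⟨a, _, rfl⟩ := hs
        exact a.2
      have h1 := hkey α E hmem
      rw [hsum1, ← hEcard]
      have h2 : ((E.card : ℝ≥0∞)) ^ ((1:ℝ)/p) ≤ ((C : ℝ≥0∞) * L) / α := by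
        rw [ENNReal.le_div_iff_mul_le (Or.inl (by exact_mod_cast hαpos.ne'))
          (Or.inl ENNReal.coe_ne_top), mul_comm]
        exact h1
      calc (E.card : ℝ≥0∞) = (((E.card : ℝ≥0∞)) ^ ((1:ℝ)/p)) ^ (p : ℝ) := by
            rw [← ENNReal.rpow_mul, one_div, inv_mul_cancel₀ hp0.ne', ENNReal.rpow_one]
        _ ≤ (((C : ℝ≥0∞) * L) / α) ^ (p : ℝ) := ENNReal.rpow_le_rpow h2 hp0.le
    calc (α : ℝ≥0∞) * Measure.count S ^ (1 / p)
        ≤ (α : ℝ≥0∞) * ((((C : ℝ≥0∞) * L) / α) ^ (p : ℝ)) ^ (1/p : ℝ) := by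
          gcongr
      _ = (α : ℝ≥0∞) * (((C : ℝ≥0∞) * L) / α) := by
          rw [← ENNReal.rpow_mul, mul_one_div_cancel hp0.ne', ENNReal.rpow_one]
      _ ≤ (C : ℝ≥0∞) * L := ENNReal.mul_div_le
end

section
/- For a sequence $k \in \ell^{p,\infty}(\mathbb{Z}^n)$ with $1 < p < \infty$ and $f \in \ell^1(\mathbb{Z}^n)$, the convolution $k*f$ defined by $(k*f)(s) = \sum_{m} k(s-m) f(m)$ satisfies $\|k*f\|_{\ell^{p,\infty}} \leq C \|k\|_{\ell^{p,\infty}} \|f\|_{\ell^1}$ for a constant $C$ depending only on $p$. -/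
open MeasureTheory
open scoped NNReal ENNReal

lemma le_wnorm {X E : Type*} [MeasurableSpace X] [Norm E]
    (μ : Measure X) (p : ℝ) (g : X → E) (α : ℝ≥0) :
    (α : ℝ≥0∞) * μ {x | (α : ℝ) < ‖g x‖} ^ (1 / p) ≤ wnorm μ p g :=
  le_iSup (fun α : ℝ≥0 => (α : ℝ≥0∞) * μ {x | (α : ℝ) < ‖g x‖} ^ (1 / p)) α

lemma wnorm_le {X E : Type*} [MeasurableSpace X] [Norm E]
    {μ : Measure X} {p : ℝ} {g : X → E} {M : ℝ≥0∞}
    (h : ∀ α : ℝ≥0, (α : ℝ≥0∞) * μ {x | (α : ℝ) < ‖g x‖} ^ (1 / p) ≤ M) :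
    wnorm μ p g ≤ M := iSup_le h

lemma wnorm_zero_fn {X E : Type*} [MeasurableSpace X] [NormedAddCommGroup E]
    (μ : Measure X) (p : ℝ) (hp : 0 < p) (g : X → E) (hg : ∀ x, g x = 0) :
    wnorm μ p g = 0 := by
  refine le_antisymm (wnorm_le fun α => ?_) zero_le
  have h : {x | (α : ℝ) < ‖g x‖} = ∅ := by
    ext x
    simp [hg x, (α.coe_nonneg).not_gt]
  rw [h, measure_empty, ENNReal.zero_rpow_of_pos (by positivity : (0:ℝ) < 1/p), mul_zero]

section Counting

variable {X : Type*} [MeasurableSpace X] [Countable X] [MeasurableSingletonClass X]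

lemma count_cheby (T : X → ℝ≥0∞) (c : ℝ≥0∞) :
    c * Measure.count {s | c < T s} ≤ ∑' s, T s := by
  have hm : MeasurableSet {s | c < T s} := (Set.to_countable _).measurableSet
  rw [Measure.count_apply hm, ← ENNReal.tsum_set_one, ← ENNReal.tsum_mul_left]
  calc ∑' (x : {s | c < T s}), c * 1
      ≤ ∑' (x : {s | c < T s}), T x := by
        refine ENNReal.tsum_le_tsum fun x => ?_
        simpa using (x.2 : c < T x).le
    _ = ∑' s, Set.indicator {s | c < T s} T s := tsum_subtype _ T
    _ ≤ ∑' s, T s := ENNReal.tsum_le_tsum fun s => Set.indicator_le_self _ _ _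

lemma count_const_indicator (s : Set X) (c : ℝ≥0∞) :
    ∑' x, s.indicator (fun _ => c) x = c * Measure.count s := by
  rw [← tsum_subtype s (fun _ => c),
    Measure.count_apply (s.to_countable.measurableSet), ← ENNReal.tsum_set_one, ← ENNReal.tsum_mul_left]
  simp

lemma tail_sum (p : ℝ) (hp : 1 < p) (w : X → ℝ≥0) (A : ℝ≥0∞)
    (hD : ∀ t : ℝ≥0, t ≠ 0 → Measure.count {x | t < w x} ≤ A ^ p * (t:ℝ≥0∞) ^ (-p))
    (b : ℝ≥0) (hb : b ≠ 0) :
    ∑' x, (if b < w x then (w x : ℝ≥0∞) else 0)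
      ≤ 2 * A ^ p * (b:ℝ≥0∞) ^ ((1:ℝ)-p) * (1 - (2:ℝ≥0∞) ^ ((1:ℝ)-p))⁻¹ := by
  set shell : ℕ → Set X := fun j => {x | 2^j * b < w x ∧ w x ≤ 2^(j+1) * b} with hshell
  have step1 : ∀ x, (if b < w x then (w x : ℝ≥0∞) else 0)
      ≤ ∑' j : ℕ, (shell j).indicator (fun _ => ((2^(j+1) * b : ℝ≥0) : ℝ≥0∞)) x := by
    intro x
    by_cases hx : b < w x
    · rw [if_pos hx]
      have hP : ∃ j : ℕ, w x ≤ 2^(j+1) * b := by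
        obtain ⟨n, hn⟩ := pow_unbounded_of_one_lt (w x / b) (by norm_num : (1:ℝ≥0) < 2)
        exact ⟨n, by
          rw [div_lt_iff₀ (zero_lt_iff.mpr hb)] at hn
          exact le_trans hn.le (by
            gcongr
            · exact one_le_two
            · exact Nat.le_succ n)⟩
      set j₀ := Nat.find hP with hj₀
      have h1 : w x ≤ 2^(j₀+1) * b := Nat.find_spec hP
      have h2 : 2^j₀ * b < w x := by
        rcases Nat.eq_zero_or_pos j₀ with h | h
        · simpa [h] using hx
        · have := Nat.find_min hP (m := j₀ - 1) (by omega)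
          push_neg at this
          convert this using 3
          omega
      calc ((w x : ℝ≥0∞)) ≤ ((2^(j₀+1) * b : ℝ≥0) : ℝ≥0∞) := by exact_mod_cast h1
        _ = (shell j₀).indicator (fun _ => ((2^(j₀+1) * b : ℝ≥0) : ℝ≥0∞)) x := by
            rw [Set.indicator_of_mem (show x ∈ shell j₀ from ⟨h2, h1⟩)]
        _ ≤ _ := ENNReal.le_tsum j₀
    · rw [if_neg hx]; exact zero_le
  have hp0 : (0:ℝ) < p := lt_trans one_pos hp
  calc ∑' x, (if b < w x then (w x : ℝ≥0∞) else 0)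
      ≤ ∑' x, ∑' j : ℕ, (shell j).indicator (fun _ => ((2^(j+1) * b : ℝ≥0) : ℝ≥0∞)) x :=
        ENNReal.tsum_le_tsum step1
    _ = ∑' j : ℕ, ∑' x, (shell j).indicator (fun _ => ((2^(j+1) * b : ℝ≥0) : ℝ≥0∞)) x :=
        ENNReal.tsum_comm
    _ = ∑' j : ℕ, ((2^(j+1) * b : ℝ≥0) : ℝ≥0∞) * Measure.count (shell j) := by
        simp_rw [count_const_indicator]
    _ ≤ ∑' j : ℕ, (2 * A ^ p * (b:ℝ≥0∞) ^ ((1:ℝ)-p)) * ((2:ℝ≥0∞) ^ ((1:ℝ)-p))^j := by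
        refine ENNReal.tsum_le_tsum fun j => ?_
        have hsub : shell j ⊆ {x | (2^j * b : ℝ≥0) < w x} := fun x hx => hx.1
        have hb2 : (2^j * b : ℝ≥0) ≠ 0 := by positivity
        have hcount : Measure.count (shell j)
            ≤ A ^ p * ((2^j * b : ℝ≥0) : ℝ≥0∞) ^ (-p) :=
          le_trans (measure_mono hsub) (hD _ hb2)
        calc ((2^(j+1) * b : ℝ≥0) : ℝ≥0∞) * Measure.count (shell j)
            ≤ ((2^(j+1) * b : ℝ≥0) : ℝ≥0∞) * (A ^ p * ((2^j * b : ℝ≥0) : ℝ≥0∞) ^ (-p)) := by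
              gcongr
          _ = (2 * A ^ p * (b:ℝ≥0∞) ^ ((1:ℝ)-p)) * ((2:ℝ≥0∞) ^ ((1:ℝ)-p))^j := by
              push_cast
              have hbne : (b:ℝ≥0∞) ≠ 0 := by exact_mod_cast hb
              have hbtop : (b:ℝ≥0∞) ≠ ⊤ := ENNReal.coe_ne_top
              have h2j : ((2:ℝ≥0∞)^j * (b:ℝ≥0∞)) ^ (-p)
                  = ((2:ℝ≥0∞)^j) ^ (-p) * (b:ℝ≥0∞) ^ (-p) :=
                ENNReal.mul_rpow_of_ne_top (by simp) hbtop _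
              rw [h2j]
              have e1 : ((2:ℝ≥0∞)^j) ^ (-p) = (2:ℝ≥0∞) ^ ((j:ℝ) * (-p)) := by
                rw [← ENNReal.rpow_natCast 2 j, ← ENNReal.rpow_mul]
              have e2 : (((2:ℝ≥0∞)) ^ ((1:ℝ)-p))^j = (2:ℝ≥0∞) ^ (((1:ℝ)-p) * (j:ℝ)) := by
                rw [← ENNReal.rpow_natCast ((2:ℝ≥0∞) ^ ((1:ℝ)-p)) j, ← ENNReal.rpow_mul]
              have e3 : ((2:ℝ≥0∞)^(j+1)) = (2:ℝ≥0∞) ^ ((j:ℝ)+1) := by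
                rw [← ENNReal.rpow_natCast 2 (j+1)]; push_cast; ring_nf
              have e4 : (b:ℝ≥0∞) * (b:ℝ≥0∞) ^ (-p) = (b:ℝ≥0∞) ^ ((1:ℝ)-p) := by
                nth_rewrite 1 [← ENNReal.rpow_one (b:ℝ≥0∞)]
                rw [← ENNReal.rpow_add _ _ hbne hbtop]; ring_nf
              rw [e1, e2, e3]
              have e5 : (2:ℝ≥0∞) ^ ((j:ℝ)+1) = (2:ℝ≥0∞) ^ ((j:ℝ)) * 2 := by
                rw [ENNReal.rpow_add _ _ (by norm_num) (by norm_num), ENNReal.rpow_one]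
              have e6 : (2:ℝ≥0∞) ^ (((1:ℝ)-p) * (j:ℝ))
                  = (2:ℝ≥0∞) ^ ((j:ℝ)) * (2:ℝ≥0∞) ^ ((j:ℝ) * (-p)) := by
                rw [← ENNReal.rpow_add _ _ (by norm_num) (by norm_num)]; ring_nf
              rw [e5, e6]
              ring_nf
              rw [← e4]
              ring
    _ = (2 * A ^ p * (b:ℝ≥0∞) ^ ((1:ℝ)-p)) * (1 - (2:ℝ≥0∞) ^ ((1:ℝ)-p))⁻¹ := by
        rw [ENNReal.tsum_mul_left, ENNReal.tsum_geometric]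
    _ = _ := by ring

end Counting

lemma tsum_conv {G : Type*} [AddCommGroup G] (g h : G → ℝ≥0∞) :
    ∑' (s : G), ∑' m, g (s - m) * h m = (∑' x, g x) * ∑' m, h m := by
  rw [ENNReal.tsum_comm]
  calc ∑' (m : G), ∑' s, g (s - m) * h m
      = ∑' (m : G), (∑' s, g (s - m)) * h m := by
        simp_rw [ENNReal.tsum_mul_right]
    _ = ∑' (m : G), (∑' x, g x) * h m := by
        congr 1; funext m
        congr 1
        exact (Equiv.subRight m).tsum_eq g
    _ = (∑' x, g x) * ∑' m, h m := ENNReal.tsum_mul_left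

lemma enorm_conv_le {G : Type*} [AddCommGroup G] (k f : G → ℂ) (s : G) :
    (‖∑' m, k (s - m) * f m‖₊ : ℝ≥0∞) ≤ ∑' m, (‖k (s - m)‖₊ : ℝ≥0∞) * (‖f m‖₊ : ℝ≥0∞) := by
  have key : ∀ m : G, (‖k (s-m)‖₊ : ℝ≥0∞) * (‖f m‖₊ : ℝ≥0∞)
      = ((‖k (s-m) * f m‖₊ : ℝ≥0) : ℝ≥0∞) := by
    intro m; rw [nnnorm_mul, ENNReal.coe_mul]
  by_cases h : Summable (fun m => ‖k (s - m) * f m‖₊)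
  · calc (‖∑' m, k (s - m) * f m‖₊ : ℝ≥0∞)
        ≤ ((∑' m, ‖k (s - m) * f m‖₊ : ℝ≥0) : ℝ≥0∞) := ENNReal.coe_le_coe.2 (nnnorm_tsum_le h)
      _ = ∑' m, ((‖k (s - m) * f m‖₊ : ℝ≥0) : ℝ≥0∞) := ENNReal.coe_tsum h
      _ = _ := by simp_rw [key]
  · have htop : ∑' m, ((‖k (s - m) * f m‖₊ : ℝ≥0) : ℝ≥0∞) = ⊤ := by
      by_contra hne
      exact h (ENNReal.tsum_coe_ne_top_iff_summable.1 hne)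
    simp_rw [key, htop]
    exact le_top

lemma final_alg (p : ℝ) (a A F C₀ : ℝ≥0∞)
    (ha : a ≠ 0) (ha' : a ≠ ⊤) (hA : A ≠ ⊤) (hF0 : F ≠ 0) (hF : F ≠ ⊤) :
    (a/2)⁻¹ * (2 * A ^ p * (a / (2*F)) ^ ((1:ℝ)-p) * C₀ * F)
      = ((2:ℝ≥0∞) ^ (p+1) * C₀) * (A * F * a⁻¹) ^ p := by
  have h2F0 : (2*F : ℝ≥0∞) ≠ 0 := by simp [hF0]
  have e1 : (a / (2*F)) ^ ((1:ℝ)-p)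
      = a ^ ((1:ℝ)-p) * ((2:ℝ≥0∞) ^ (p-1) * F ^ (p-1)) := by
    rw [div_eq_mul_inv, ENNReal.mul_rpow_of_ne_top ha' (by simp [h2F0]),
      ENNReal.inv_rpow, ← ENNReal.rpow_neg, show -((1:ℝ)-p) = p-1 by ring,
      ENNReal.mul_rpow_of_ne_top (by norm_num) hF]
  have e2 : (a/2)⁻¹ = 2 * a⁻¹ := by
    rw [ENNReal.inv_div (Or.inr ha') (Or.inr ha), div_eq_mul_inv]
  have e3 : (A * F * a⁻¹) ^ p = A ^ p * F ^ p * a ^ (-p) := by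
    rw [ENNReal.mul_rpow_of_ne_top (by finiteness) (by simp [ha]),
      ENNReal.mul_rpow_of_ne_top hA hF, ENNReal.inv_rpow, ← ENNReal.rpow_neg]
  have e4 : a⁻¹ * a ^ ((1:ℝ)-p) = a ^ (-p) := by
    rw [← ENNReal.rpow_neg_one, ← ENNReal.rpow_add _ _ ha ha']
    congr 1; ring
  have e5 : F ^ (p-1:ℝ) * F = F ^ p := by
    nth_rewrite 2 [← ENNReal.rpow_one F]
    rw [← ENNReal.rpow_add _ _ hF0 hF]
    congr 1; ring
  have h4 : (2:ℝ≥0∞) ^ (2:ℝ) = 4 := by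
    rw [show (2:ℝ) = ((2:ℕ):ℝ) by norm_num, ENNReal.rpow_natCast]; norm_num
  have e6 : (2:ℝ≥0∞) * 2 * 2 ^ (p-1:ℝ) = 2 ^ (p+1) := by
    rw [show (p+1:ℝ) = (p-1) + 2 by ring,
      ENNReal.rpow_add _ _ (by norm_num) (by norm_num), h4]
    ring
  rw [e1, e2, e3]
  calc 2 * a⁻¹ * (2 * A ^ p * (a ^ ((1:ℝ)-p) * ((2:ℝ≥0∞) ^ (p-1) * F ^ (p-1))) * C₀ * F)
      = (2 * 2 * 2 ^ (p-1:ℝ)) * C₀ * (A ^ p * (F ^ (p-1:ℝ) * F) * (a⁻¹ * a ^ ((1:ℝ)-p))) := by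
        ring
    _ = _ := by rw [e4, e5, e6]

/-- Weak Young inequality on ℤⁿ: for `k ∈ ℓ^{p,∞}(ℤⁿ)` and `f ∈ ℓ¹(ℤⁿ)`,
`‖k * f‖_{ℓ^{p,∞}} ≤ C ‖k‖_{ℓ^{p,∞}} ‖f‖_{ℓ¹}` with `C` depending only on `p`. -/
theorem weak_young_Zn (p : ℝ) (hp : 1 < p) :
    ∃ C : ℝ≥0∞, C ≠ ⊤ ∧ ∀ (n : ℕ) (k f : (Fin n → ℤ) → ℂ),
      wnorm (Measure.count : Measure (Fin n → ℤ)) p k ≠ ⊤ → Summable (fun m => ‖f m‖) →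
      wnorm (Measure.count : Measure (Fin n → ℤ)) p (fun s => ∑' m, k (s - m) * f m)
        ≤ C * wnorm (Measure.count : Measure (Fin n → ℤ)) p k * ∑' m, (‖f m‖₊ : ℝ≥0∞) := by
  have hp0 : (0:ℝ) < p := one_pos.trans hp
  set r : ℝ≥0∞ := (2:ℝ≥0∞) ^ ((1:ℝ) - p) with hr
  have hr1 : r < 1 := ENNReal.rpow_lt_one_of_one_lt_of_neg (by norm_num) (by linarith)
  have hC₀ : (1 - r)⁻¹ ≠ ⊤ := by
    simp only [ENNReal.inv_ne_top]
    exact (tsub_pos_of_lt hr1).ne'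
  set K : ℝ≥0∞ := (2:ℝ≥0∞) ^ (p+1) * (1 - r)⁻¹ with hK
  have hKtop : K ≠ ⊤ :=
    ENNReal.mul_ne_top (ENNReal.rpow_ne_top_of_nonneg (by linarith) (by norm_num)) hC₀
  refine ⟨K ^ (1/p), ENNReal.rpow_ne_top_of_nonneg (by positivity) hKtop, ?_⟩
  intro n k f hA hf
  set A := wnorm (Measure.count : Measure (Fin n → ℤ)) p k with hAdef
  set F : ℝ≥0∞ := ∑' m, (‖f m‖₊ : ℝ≥0∞) with hFdef
  by_cases hk0 : ∀ x, k x = 0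
  · have hz : (fun s : Fin n → ℤ => ∑' m, k (s - m) * f m) = fun _ => (0:ℂ) := by
      funext s; simp [hk0]
    rw [hz, wnorm_zero_fn _ p hp0 _ (fun _ => rfl)]
    exact zero_le
  by_cases hf0 : ∀ m, f m = 0
  · have hz : (fun s : Fin n → ℤ => ∑' m, k (s - m) * f m) = fun _ => (0:ℂ) := by
      funext s; simp [hf0]
    rw [hz, wnorm_zero_fn _ p hp0 _ (fun _ => rfl)]
    exact zero_le
  have hF0 : F ≠ 0 := by
    intro h
    apply hf0
    intro m
    have := ENNReal.tsum_eq_zero.mp h m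
    simpa using this
  have hFtop : F ≠ ⊤ := by
    refine ENNReal.tsum_coe_ne_top_iff_summable.2 ?_
    rw [← NNReal.summable_coe]
    simpa [coe_nnnorm] using hf
  -- distribution estimate for k
  have hD : ∀ t : ℝ≥0, t ≠ 0 →
      Measure.count {x : Fin n → ℤ | t < ‖k x‖₊} ≤ A ^ p * (t:ℝ≥0∞) ^ (-p) := by
    intro t ht
    have hset : {x : Fin n → ℤ | t < ‖k x‖₊} = {x | (t:ℝ) < ‖k x‖} := by
      ext x
      simp [← coe_nnnorm, NNReal.coe_lt_coe]
    rw [hset]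
    set D := Measure.count {x : Fin n → ℤ | (t:ℝ) < ‖k x‖} with hDdef
    have htne : (t:ℝ≥0∞) ≠ 0 := by exact_mod_cast ht
    have h1 : (t:ℝ≥0∞) * D ^ (1/p) ≤ A := le_wnorm _ p k t
    have h2 : D ^ (1/p) ≤ (t:ℝ≥0∞)⁻¹ * A := by
      rw [← one_mul (D ^ (1/p)), ← ENNReal.inv_mul_cancel htne ENNReal.coe_ne_top, mul_assoc]
      exact mul_le_mul_right h1 _
    calc D = (D ^ (1/p:ℝ)) ^ p := by
          rw [← ENNReal.rpow_mul, one_div, inv_mul_cancel₀ hp0.ne', ENNReal.rpow_one]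
      _ ≤ ((t:ℝ≥0∞)⁻¹ * A) ^ p := ENNReal.rpow_le_rpow h2 hp0.le
      _ = A ^ p * (t:ℝ≥0∞) ^ (-p) := by
          rw [ENNReal.mul_rpow_of_ne_top (ENNReal.inv_ne_top.2 htne) hA,
            ENNReal.inv_rpow, ← ENNReal.rpow_neg, mul_comm]
  set F' : ℝ≥0 := F.toNNReal with hF'def
  have hFc : (F' : ℝ≥0∞) = F := ENNReal.coe_toNNReal hFtop
  have hF'0 : F' ≠ 0 := by
    intro h
    apply hF0
    rw [← hFc, h, ENNReal.coe_zero]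
  refine wnorm_le fun α => ?_
  by_cases hα : α = 0
  · simp [hα]
  set b : ℝ≥0 := α / (2 * F') with hbdef
  have hbn : b ≠ 0 := div_ne_zero hα (mul_ne_zero two_ne_zero hF'0)
  set g₁ : (Fin n → ℤ) → ℝ≥0∞ := fun x => if b < ‖k x‖₊ then (‖k x‖₊ : ℝ≥0∞) else 0 with hg₁
  set T : (Fin n → ℤ) → ℝ≥0∞ := fun s => ∑' m, g₁ (s - m) * (‖f m‖₊ : ℝ≥0∞) with hT
  have hhalf : ((α/2 : ℝ≥0) : ℝ≥0∞) ≠ 0 := by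
    exact_mod_cast div_ne_zero hα two_ne_zero
  have hincl : {s : Fin n → ℤ | (α:ℝ) < ‖∑' m, k (s - m) * f m‖}
      ⊆ {s | ((α/2 : ℝ≥0):ℝ≥0∞) < T s} := by
    intro s hs
    rw [Set.mem_setOf_eq]
    by_contra hTs
    rw [not_lt] at hTs
    have h1 : (α : ℝ≥0∞) < ∑' m, (‖k (s - m)‖₊ : ℝ≥0∞) * (‖f m‖₊ : ℝ≥0∞) := by
      refine lt_of_lt_of_le ?_ (enorm_conv_le k f s)
      have : α < ‖∑' m, k (s - m) * f m‖₊ := by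
        rw [← NNReal.coe_lt_coe, coe_nnnorm]; exact hs
      exact_mod_cast this
    have hsplit : ∑' m, (‖k (s - m)‖₊ : ℝ≥0∞) * (‖f m‖₊:ℝ≥0∞)
        = T s + ∑' m, (if b < ‖k (s-m)‖₊ then 0 else (‖k (s-m)‖₊:ℝ≥0∞)) * (‖f m‖₊:ℝ≥0∞) := by
      rw [hT, ← ENNReal.tsum_add]
      congr 1; funext m
      by_cases hc : b < ‖k (s-m)‖₊ <;> simp [hg₁, hc, add_mul]
    have hB : ∑' m, (if b < ‖k (s-m)‖₊ then 0 else (‖k (s-m)‖₊:ℝ≥0∞)) * (‖f m‖₊:ℝ≥0∞)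
        ≤ ((α/2 : ℝ≥0) : ℝ≥0∞) := by
      calc ∑' m, (if b < ‖k (s-m)‖₊ then 0 else (‖k (s-m)‖₊:ℝ≥0∞)) * (‖f m‖₊:ℝ≥0∞)
          ≤ ∑' m, (b:ℝ≥0∞) * (‖f m‖₊:ℝ≥0∞) := by
            refine ENNReal.tsum_le_tsum fun m => ?_
            refine mul_le_mul_left ?_ _
            split_ifs with hc
            · exact zero_le
            · exact_mod_cast not_lt.mp hc
        _ = (b:ℝ≥0∞) * F := ENNReal.tsum_mul_left
        _ = ((α/2 : ℝ≥0) : ℝ≥0∞) := by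
            rw [← hFc, ← ENNReal.coe_mul]
            congr 1
            rw [hbdef]
            field_simp
    have hcontr : (α:ℝ≥0∞) < ((α/2:ℝ≥0):ℝ≥0∞) + ((α/2:ℝ≥0):ℝ≥0∞) :=
      h1.trans_le (by rw [hsplit]; exact add_le_add hTs hB)
    rw [← ENNReal.coe_add, add_halves] at hcontr
    exact lt_irrefl _ hcontr
  have hcheb : ((α/2:ℝ≥0):ℝ≥0∞) * Measure.count {s : Fin n → ℤ | ((α/2:ℝ≥0):ℝ≥0∞) < T s}
      ≤ (∑' x, g₁ x) * F := by
    refine le_trans (count_cheby T _) (le_of_eq ?_)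
    rw [hT, hFdef]
    exact tsum_conv g₁ fun m => (‖f m‖₊:ℝ≥0∞)
  have htail : ∑' x, g₁ x ≤ 2 * A ^ p * (b:ℝ≥0∞) ^ ((1:ℝ)-p) * (1-r)⁻¹ :=
    tail_sum p hp (fun x => ‖k x‖₊) A hD b hbn
  set μα := Measure.count {s : Fin n → ℤ | (α:ℝ) < ‖∑' m, k (s-m) * f m‖} with hμα
  have hμle : ((α/2:ℝ≥0):ℝ≥0∞) * μα ≤ 2 * A^p * (b:ℝ≥0∞)^((1:ℝ)-p) * (1-r)⁻¹ * F := by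
    calc ((α/2:ℝ≥0):ℝ≥0∞) * μα
        ≤ ((α/2:ℝ≥0):ℝ≥0∞) * Measure.count {s : Fin n → ℤ | ((α/2:ℝ≥0):ℝ≥0∞) < T s} := by
          gcongr
          exact measure_mono hincl
      _ ≤ (∑' x, g₁ x) * F := hcheb
      _ ≤ 2 * A^p * (b:ℝ≥0∞)^((1:ℝ)-p) * (1-r)⁻¹ * F := by gcongr
  have hαne : (α:ℝ≥0∞) ≠ 0 := by exact_mod_cast hα
  have hμ2 : μα ≤ K * ((A * F * (α:ℝ≥0∞)⁻¹) ^ p) := by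
    have step : μα ≤ ((α/2:ℝ≥0):ℝ≥0∞)⁻¹ * (2 * A^p * (b:ℝ≥0∞)^((1:ℝ)-p) * (1-r)⁻¹ * F) := by
      have hcanc : ((α/2:ℝ≥0):ℝ≥0∞)⁻¹ * (((α/2:ℝ≥0):ℝ≥0∞) * μα) = μα := by
        rw [← mul_assoc, ENNReal.inv_mul_cancel hhalf ENNReal.coe_ne_top, one_mul]
      rw [← hcanc]
      exact mul_le_mul_right hμle _
    refine step.trans (le_of_eq ?_)
    have hcoe_half : ((α/2:ℝ≥0):ℝ≥0∞) = (α:ℝ≥0∞)/2 := by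
      rw [ENNReal.coe_div two_ne_zero]; norm_num
    have hcoe_b : (b:ℝ≥0∞) = (α:ℝ≥0∞)/(2*F) := by
      rw [hbdef, ENNReal.coe_div (mul_ne_zero two_ne_zero hF'0), ENNReal.coe_mul, hFc]
      norm_num
    rw [hcoe_half, hcoe_b]
    exact final_alg p (α:ℝ≥0∞) A F ((1-r)⁻¹) hαne ENNReal.coe_ne_top hA hF0 hFtop
  have hZtop : (A * F * (α:ℝ≥0∞)⁻¹) ^ p ≠ ⊤ := by
    refine ENNReal.rpow_ne_top_of_nonneg hp0.le ?_
    exact ENNReal.mul_ne_top (ENNReal.mul_ne_top hA hFtop) (ENNReal.inv_ne_top.2 hαne)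
  calc (α:ℝ≥0∞) * μα ^ (1/p)
      ≤ (α:ℝ≥0∞) * (K * (A * F * (α:ℝ≥0∞)⁻¹)^p) ^ (1/p) := by
        gcongr
    _ = (α:ℝ≥0∞) * (K^(1/p) * (A * F * (α:ℝ≥0∞)⁻¹)) := by
        rw [ENNReal.mul_rpow_of_ne_top hKtop hZtop, ← ENNReal.rpow_mul,
          mul_one_div_cancel hp0.ne', ENNReal.rpow_one]
    _ = K^(1/p) * A * F * ((α:ℝ≥0∞) * (α:ℝ≥0∞)⁻¹) := by ring
    _ = K^(1/p) * A * F := by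
        rw [ENNReal.mul_inv_cancel hαne ENNReal.coe_ne_top, mul_one]
end
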